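/- Fix a prime p and n ≥ 2. The short exact sequence of diagrams 0 → B → T(n) → ℤ_{1̄} → 0 of the previous statement does not split as a sequence of diagrams: there is no morphism of diagrams s : ℤ_{1̄} → T(n) with (projection) ∘ s = id. Equivalently, T(n) is not isomorphic as a diagram to the direct sum B ⊕ ℤ_{1̄}. -/

import Mathlib

def Tres1 (p : ℕ) : ℤ × ZMod p →+ ℤ :=
  AddMonoidHom.mk' (fun x => (p : ℤ) * x.1) (by intro a b; simp [mul_add])

def Ttr1 (p : ℕ) : ℤ →+ ℤ × ZMod p :=
  AddMonoidHom.mk' (fun m => (m, -(m : ZMod p))) (by intro a b; simp [Prod.ext_iff]; ring)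

def Tresk (p : ℕ) : ℤ × ZMod p →+ ℤ × ZMod p :=
  AddMonoidHom.mk' (fun x => (x.1, 0)) (by intro a b; simp)

def Ttrk (p : ℕ) : ℤ × ZMod p →+ ℤ × ZMod p :=
  AddMonoidHom.mk' (fun x => ((p : ℤ) * x.1, x.2)) (by intro a b; simp [Prod.ext_iff]; ring)

/-- Level-1 restriction of the direct sum `B ⊕ ℤ_{1̄}`. -/
def Dres1 (p : ℕ) : ZMod p × ℤ →+ ℤ :=
  AddMonoidHom.mk' (fun x => (p : ℤ) * x.2) (by intro a b; simp [mul_add])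

/-- Level-1 transfer of the direct sum `B ⊕ ℤ_{1̄}`. -/
def Dtr1 (p : ℕ) : ℤ →+ ZMod p × ℤ :=
  AddMonoidHom.mk' (fun m => (0, m)) (by intro a b; simp)

/-- Higher restriction of the direct sum `B ⊕ ℤ_{1̄}`. -/
def Dresk (p : ℕ) : ZMod p × ℤ →+ ZMod p × ℤ :=
  AddMonoidHom.prodMap (p • AddMonoidHom.id (ZMod p)) (AddMonoidHom.id ℤ)

/-- Higher transfer of the direct sum `B ⊕ ℤ_{1̄}`. -/
def Dtrk (p : ℕ) : ZMod p × ℤ →+ ZMod p × ℤ :=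
  AddMonoidHom.prodMap (AddMonoidHom.id (ZMod p)) (AddMonoidHom.mulLeft (p : ℤ))

/-- The levelwise split short exact sequence `0 → B → T(n) → ℤ_{1̄} → 0` does not split as
a sequence of diagrams: there is no diagram-morphism section of the projection, and `T(n)`
is not isomorphic as a diagram to `B ⊕ ℤ_{1̄}`. -/
theorem stmt12 (p n : ℕ) (hp : p.Prime) (hn : 2 ≤ n) :
    (¬ ∃ s : ℕ → (ℤ →+ ℤ × ZMod p),
      (∀ k, 1 ≤ k → k ≤ n → (AddMonoidHom.fst ℤ (ZMod p)).comp (s k) = AddMonoidHom.id ℤ) ∧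
      (∀ x : ℤ, Tres1 p (s 1 x) = (p : ℤ) * x) ∧
      (∀ x : ℤ, s 1 x = Ttr1 p x) ∧
      (∀ k, 2 ≤ k → k ≤ n →
        (∀ x : ℤ, Tresk p (s k x) = s (k - 1) x) ∧
        (∀ x : ℤ, s k ((p : ℤ) * x) = Ttrk p (s (k - 1) x)))) ∧
    (¬ ∃ (e : ℕ → (ℤ × ZMod p ≃+ ZMod p × ℤ)) (e0 : ℤ ≃+ ℤ),
      (∀ x : ℤ × ZMod p, e0 (Tres1 p x) = Dres1 p (e 1 x)) ∧
      (∀ x : ℤ, e 1 (Ttr1 p x) = Dtr1 p (e0 x)) ∧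
      (∀ k, 2 ≤ k → k ≤ n →
        (∀ x : ℤ × ZMod p, e (k - 1) (Tresk p x) = Dresk p (e k x)) ∧
        (∀ x : ℤ × ZMod p, e k (Ttrk p x) = Dtrk p (e (k - 1) x)))) := by

  haveI := Fact.mk hp
  have hone : (1 : ZMod p) ≠ 0 := one_ne_zero
  constructor
  · rintro ⟨s, h1, h2, h3, h4⟩
    have htr := (h4 2 le_rfl hn).2 1
    have hs1 : s 1 1 = ((1 : ℤ), (-1 : ZMod p)) := by
      simpa [Ttr1, AddMonoidHom.mk'_apply] using h3 1
    have hzero : (s 2 ((p : ℤ) * 1)).2 = 0 := by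
      have h : s 2 ((p : ℤ) * 1) = (p : ℤ) • s 2 1 := by
        simpa [smul_eq_mul] using map_zsmul (s 2) (p : ℤ) 1
      rw [h]
      simp [Prod.smul_snd, zsmul_eq_mul]
    rw [htr, hs1] at hzero
    simp [Ttrk, AddMonoidHom.mk'_apply] at hzero
  · rintro ⟨e, e0, hres1, htr1, hk⟩
    have hres2 := (hk 2 le_rfl hn).1
    have hfst : ∀ m : ℤ, (e 1 ((m : ℤ), (0 : ZMod p))).1 = 0 := by
      intro m
      have h := hres2 ((m : ℤ), (0 : ZMod p))
      have hT : Tresk p ((m : ℤ), (0 : ZMod p)) = ((m : ℤ), (0 : ZMod p)) := by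
        simp [Tresk, AddMonoidHom.mk'_apply]
      rw [hT] at h
      rw [h]
      simp [Dresk, AddMonoidHom.prodMap, nsmul_eq_mul, ZMod.natCast_self]
    set y := e 1 ((0 : ℤ), (-1 : ZMod p)) with hy
    have hsplit : y = e 1 ((1 : ℤ), (-1 : ZMod p)) - e 1 ((1 : ℤ), (0 : ZMod p)) := by
      rw [← map_sub]
      norm_num [Prod.ext_iff, hy]
    have hy1 : y.1 = 0 := by
      have h1' : e 1 ((1 : ℤ), (-1 : ZMod p)) = Dtr1 p (e0 1) := by
        simpa [Ttr1, AddMonoidHom.mk'_apply] using htr1 1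
      rw [hsplit, Prod.fst_sub, h1', hfst 1]
      simp [Dtr1, AddMonoidHom.mk'_apply]
    have hy2 : y.2 = 0 := by
      have hp0 : (p : ℕ) • y = 0 := by
        rw [hy, ← map_nsmul]
        have : (p : ℕ) • (((0 : ℤ), (-1 : ZMod p)) : ℤ × ZMod p) = 0 := by
          simp [Prod.smul_def, nsmul_eq_mul, ZMod.natCast_self]
        rw [this, map_zero]
      have : (p : ℕ) • y.2 = 0 := by rw [← Prod.smul_snd, hp0]; rfl
      have hpz : (p : ℤ) * y.2 = 0 := by simpa [nsmul_eq_mul] using this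
      rcases mul_eq_zero.mp hpz with h | h
      · exact absurd (by exact_mod_cast h) hp.ne_zero
      · exact h
    have hyz : y = 0 := Prod.ext hy1 hy2
    have h0 : (((0 : ℤ), (-1 : ZMod p)) : ℤ × ZMod p) = 0 :=
      (e 1).injective (by rw [map_zero, ← hy, hyz])
    exact hone (neg_eq_zero.mp (Prod.ext_iff.mp h0).2)
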